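/- Let C be a covering of a finite nonempty set U and let S_C = {X ⊆ U : SL(X) = X} be the fixed point family of the second type of covering lower approximation. Then S_C is a closure system of U (i.e., U ∈ S_C and S_C is closed under pairwise intersections) if and only if C is unary. -/

import Mathlib

open Set

/-- A covering of a finite nonempty universe `α`: a family of nonempty subsets whose union is everything. -/
def IsCovering {α : Type*} (C : Set (Set α)) : Prop :=
  (∀ K ∈ C, K.Nonempty) ∧ ⋃₀ C = Set.univ

/-- The second type of covering lower approximation. -/
def SL {α : Type*} (C : Set (Set α)) (X : Set α) : Set α :=
  ⋃₀ {K | K ∈ C ∧ K ⊆ X}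

/-- The second type of covering upper approximation. -/
def SH {α : Type*} (C : Set (Set α)) (X : Set α) : Set α :=
  ⋃₀ {K | K ∈ C ∧ (K ∩ X).Nonempty}

/-- The minimal description of a point. -/
def Md {α : Type*} (C : Set (Set α)) (x : α) : Set (Set α) :=
  {K | K ∈ C ∧ x ∈ K ∧ ∀ S ∈ C, x ∈ S → S ⊆ K → S = K}

/-- A covering is unary if every point has exactly one element in its minimal description. -/
def Unary {α : Type*} (C : Set (Set α)) : Prop :=
  ∀ x : α, ∃! K, K ∈ Md C x

/-- The neighborhood of a point. -/
def Nbhd {α : Type*} (C : Set (Set α)) (x : α) : Set α :=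
  ⋂₀ {K | K ∈ C ∧ x ∈ K}

/-- The indiscernible neighborhood of a point. -/
def IndNbhd {α : Type*} (C : Set (Set α)) (x : α) : Set α :=
  ⋃₀ {K | K ∈ C ∧ x ∈ K}

/-- A member of the covering is reducible if it is a union of other members. -/
def Reducible {α : Type*} (C : Set (Set α)) (K : Set α) : Prop :=
  ∃ D ⊆ C \ {K}, K = ⋃₀ D

/-- The reduct of a covering: its irreducible members. -/
def reduct {α : Type*} (C : Set (Set α)) : Set (Set α) :=
  {K | K ∈ C ∧ ¬ Reducible C K}

/-- The closure operator induced by the fixed point family of `SL`. -/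
def clC {α : Type*} (C : Set (Set α)) (X : Set α) : Set α :=
  ⋂₀ {S | SL C S = S ∧ X ⊆ S}

lemma SL_subset' {α : Type*} (C : Set (Set α)) (X : Set α) : SL C X ⊆ X := by
  rintro y ⟨K, ⟨hK, hKX⟩, hy⟩; exact hKX hy

lemma exists_md' {α : Type*} [Fintype α] (C : Set (Set α)) (x : α) {K : Set α}
    (hK : K ∈ C) (hx : x ∈ K) : ∃ M ∈ Md C x, M ⊆ K := by
  have hfin : ({S | S ∈ C ∧ x ∈ S ∧ S ⊆ K} : Set (Set α)).Finite := Set.toFinite _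
  obtain ⟨M, hM, hmin⟩ := hfin.exists_minimal ⟨K, hK, hx, subset_rfl⟩
  exact ⟨M, ⟨hM.1, hM.2.1, fun S hS hxS hSM =>
    subset_antisymm hSM (hmin ⟨hS, hxS, hSM.trans hM.2.2⟩ hSM)⟩, hM.2.2⟩

theorem stmt_0 {α : Type*} [Fintype α] [Nonempty α] (C : Set (Set α))
    (hC : IsCovering C) :
    (Set.univ ∈ {X : Set α | SL C X = X} ∧
      ∀ F1 ∈ {X : Set α | SL C X = X}, ∀ F2 ∈ {X : Set α | SL C X = X},
        F1 ∩ F2 ∈ {X : Set α | SL C X = X}) ↔ Unary C := by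
  constructor
  · rintro ⟨-, hint⟩ x
    obtain ⟨K, hK, hxK⟩ : x ∈ ⋃₀ C := hC.2 ▸ mem_univ x
    obtain ⟨M, hM, -⟩ := exists_md' C x hK hxK
    refine ⟨M, hM, ?_⟩
    intro M' hM'
    have fix : ∀ N ∈ C, SL C N = N := fun N hN =>
      subset_antisymm (SL_subset' C N) (fun y hy => ⟨N, ⟨hN, subset_rfl⟩, hy⟩)
    have h12 := hint M' (fix M' hM'.1) M (fix M hM.1)
    have hxm : x ∈ M' ∩ M := ⟨hM'.2.1, hM.2.1⟩
    rw [mem_setOf_eq] at h12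
    rw [← h12] at hxm
    obtain ⟨S, ⟨hS, hSsub⟩, hxS⟩ := hxm
    have e1 := hM'.2.2 S hS hxS (hSsub.trans inter_subset_left)
    have e2 := hM.2.2 S hS hxS (hSsub.trans inter_subset_right)
    rw [← e1, e2]
  · intro hU
    constructor
    · show SL C univ = univ
      apply subset_antisymm (SL_subset' _ _)
      intro y _
      obtain ⟨K, hK, hyK⟩ : y ∈ ⋃₀ C := hC.2 ▸ mem_univ y
      exact ⟨K, ⟨hK, subset_univ K⟩, hyK⟩
    · intro F1 h1 F2 h2
      show SL C (F1 ∩ F2) = F1 ∩ F2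
      apply subset_antisymm (SL_subset' _ _)
      rintro x ⟨hx1, hx2⟩
      rw [mem_setOf_eq] at h1 h2
      have hx1' : x ∈ SL C F1 := h1.symm ▸ hx1
      have hx2' : x ∈ SL C F2 := h2.symm ▸ hx2
      obtain ⟨K1, ⟨hK1, hK1s⟩, hxK1⟩ := hx1'
      obtain ⟨K2, ⟨hK2, hK2s⟩, hxK2⟩ := hx2'
      obtain ⟨M1, hM1, hM1K⟩ := exists_md' C x hK1 hxK1
      obtain ⟨M2, hM2, hM2K⟩ := exists_md' C x hK2 hxK2
      obtain ⟨M, -, huniq⟩ := hU x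
      have e12 : M1 = M2 := (huniq M1 hM1).trans (huniq M2 hM2).symm
      exact ⟨M1, ⟨hM1.1, subset_inter (hM1K.trans hK1s)
        ((e12 ▸ hM2K : M1 ⊆ K2).trans hK2s)⟩, hM1.2.1⟩
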